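/- Let A be a bounded self-adjoint operator on a Hilbert space H and B a bounded self-adjoint operator on a Hilbert space K. Then the spectrum of A ⊗ id_K + id_H ⊗ B equals {x + y : x ∈ σ(A), y ∈ σ(B)}. -/

import Mathlib

set_option linter.unusedSectionVars false

open scoped InnerProductSpace TensorProduct

section TensorExt

variable {H K HK : Type*}
    [NormedAddCommGroup H] [InnerProductSpace ℂ H]
    [NormedAddCommGroup K] [InnerProductSpace ℂ K]
    [NormedAddCommGroup HK] [InnerProductSpace ℂ HK] [CompleteSpace HK]
    (tmul : H →ₗ[ℂ] K →ₗ[ℂ] HK)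
    (hinner : ∀ (h h' : H) (k k' : K),
      ⟪tmul h k, tmul h' k'⟫_ℂ = ⟪h, h'⟫_ℂ * ⟪k, k'⟫_ℂ)

/-- Every element of the algebraic tensor product maps (under `lift tmul`) to a sum
`∑ tmul (g j) (b j)` with `b` orthonormal. -/
theorem exists_orthonormal_rep (x : H ⊗[ℂ] K) :
    ∃ (m : ℕ) (g : Fin m → H) (b : Fin m → K), Orthonormal ℂ b ∧
      x = ∑ j, g j ⊗ₜ[ℂ] b j := by
  obtain ⟨s, rfl⟩ := TensorProduct.exists_finset x
  set E : Submodule ℂ K := Submodule.span ℂ (Prod.snd '' (↑s : Set (H × K))) with hE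
  haveI : FiniteDimensional ℂ E :=
    Module.Finite.span_of_finite ℂ ((s.finite_toSet).image _)
  set b0 := stdOrthonormalBasis ℂ E
  set m := Module.finrank ℂ E
  have hmem : ∀ p ∈ s, p.2 ∈ E := fun p hp =>
    Submodule.subset_span ⟨p, hp, rfl⟩
  refine ⟨m, fun j => ∑ p ∈ s.attach, (b0.repr ⟨p.1.2, hmem p.1 p.2⟩ j) • p.1.1,
    fun j => (b0 j : K), ?_, ?_⟩
  · rw [orthonormal_iff_ite]
    intro i j
    rw [← Submodule.coe_inner, ← orthonormal_iff_ite.mp b0.orthonormal i j]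
  · rw [← Finset.sum_attach s (fun p => p.1 ⊗ₜ[ℂ] p.2)]
    have hrep : ∀ p : {x // x ∈ s}, (p.1.2 : K) =
        ∑ j, (b0.repr ⟨p.1.2, hmem p.1 p.2⟩ j) • (b0 j : K) := by
      intro p
      simpa using
        (congrArg (fun z : E => (z : K)) (b0.sum_repr (⟨p.1.2, hmem p.1 p.2⟩ : E))).symm
    calc ∑ p ∈ s.attach, p.1.1 ⊗ₜ[ℂ] p.1.2
        = ∑ p ∈ s.attach, ∑ j, ((b0.repr ⟨p.1.2, hmem p.1 p.2⟩ j) • p.1.1) ⊗ₜ[ℂ] (b0 j : K) := by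
          refine Finset.sum_congr rfl fun p _ => ?_
          conv_lhs => rw [hrep p]
          rw [TensorProduct.tmul_sum]
          refine Finset.sum_congr rfl fun j _ => ?_
          rw [TensorProduct.tmul_smul, TensorProduct.smul_tmul']
      _ = ∑ j, (∑ p ∈ s.attach, (b0.repr ⟨p.1.2, hmem p.1 p.2⟩ j) • p.1.1) ⊗ₜ[ℂ] (b0 j : K) := by
          rw [Finset.sum_comm]
          exact Finset.sum_congr rfl fun j _ => (TensorProduct.sum_tmul _ _ _).symm

include hinner in
theorem inner_L_sum {m : ℕ} (g g' : Fin m → H) (b : Fin m → K) (hb : Orthonormal ℂ b) :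
    ⟪TensorProduct.lift tmul (∑ j, g j ⊗ₜ[ℂ] b j),
      TensorProduct.lift tmul (∑ j, g' j ⊗ₜ[ℂ] b j)⟫_ℂ = ∑ j, ⟪g j, g' j⟫_ℂ := by
  rw [map_sum, map_sum, sum_inner]
  have : ∀ j, ⟪TensorProduct.lift tmul (g j ⊗ₜ[ℂ] b j),
      ∑ j', TensorProduct.lift tmul (g' j' ⊗ₜ[ℂ] b j')⟫_ℂ = ⟪g j, g' j⟫_ℂ := by
    intro j
    rw [inner_sum]
    have : ∀ j', ⟪TensorProduct.lift tmul (g j ⊗ₜ[ℂ] b j),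
        TensorProduct.lift tmul (g' j' ⊗ₜ[ℂ] b j')⟫_ℂ
        = ⟪g j, g' j'⟫_ℂ * (if j = j' then 1 else 0) := by
      intro j'
      rw [TensorProduct.lift.tmul, TensorProduct.lift.tmul, hinner,
        orthonormal_iff_ite.mp hb j j']
    simp only [this, mul_ite, mul_one, mul_zero, Finset.sum_ite_eq, Finset.mem_univ, if_true]
  exact Finset.sum_congr rfl fun j _ => this j

include hinner in
theorem norm_L_sum {m : ℕ} (g : Fin m → H) (b : Fin m → K) (hb : Orthonormal ℂ b) :
    ‖TensorProduct.lift tmul (∑ j, g j ⊗ₜ[ℂ] b j)‖ ^ 2 = ∑ j, ‖g j‖ ^ 2 := by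
  have h1 := inner_L_sum tmul hinner g g b hb
  have h2 : ∀ j, ⟪g j, g j⟫_ℂ = (‖g j‖ : ℂ) ^ 2 := fun j => inner_self_eq_norm_sq_to_K (g j)
  simp only [h2] at h1
  have := congrArg Complex.re h1
  rw [inner_self_eq_norm_sq_to_K] at this
  simpa [← Complex.ofReal_pow] using this
include hinner in
theorem norm_L_map_le (T : H →L[ℂ] H) (x : H ⊗[ℂ] K) :
    ‖TensorProduct.lift tmul
        (TensorProduct.map (T : H →ₗ[ℂ] H) LinearMap.id x)‖ ≤
      ‖T‖ * ‖TensorProduct.lift tmul x‖ := by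
  obtain ⟨m, g, b, hb, rfl⟩ := exists_orthonormal_rep x
  have hmap : TensorProduct.map (T : H →ₗ[ℂ] H) LinearMap.id (∑ j, g j ⊗ₜ[ℂ] b j)
      = ∑ j, (T (g j)) ⊗ₜ[ℂ] b j := by
    rw [map_sum]; exact Finset.sum_congr rfl fun j _ => TensorProduct.map_tmul _ _ _ _
  rw [hmap]
  have h1 := norm_L_sum tmul hinner (fun j => T (g j)) b hb
  have h2 := norm_L_sum tmul hinner g b hb
  have key : ‖TensorProduct.lift tmul (∑ j, (T (g j)) ⊗ₜ[ℂ] b j)‖ ^ 2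
      ≤ (‖T‖ * ‖TensorProduct.lift tmul (∑ j, g j ⊗ₜ[ℂ] b j)‖) ^ 2 := by
    rw [h1, mul_pow, h2, Finset.mul_sum]
    refine Finset.sum_le_sum fun j _ => ?_
    have := T.le_opNorm (g j)
    calc ‖T (g j)‖ ^ 2 ≤ (‖T‖ * ‖g j‖) ^ 2 := by
          apply pow_le_pow_left₀ (norm_nonneg _) this
      _ = ‖T‖ ^ 2 * ‖g j‖ ^ 2 := by ring
  have hnn : (0:ℝ) ≤ ‖T‖ * ‖TensorProduct.lift tmul (∑ j, g j ⊗ₜ[ℂ] b j)‖ :=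
    mul_nonneg (norm_nonneg _) (norm_nonneg _)
  nlinarith [norm_nonneg (TensorProduct.lift tmul (∑ j, (T (g j)) ⊗ₜ[ℂ] b j))]

include hinner in
theorem exists_tensor_extension
    (hdense : Dense (Submodule.span ℂ {z : HK | ∃ h k, z = tmul h k} : Set HK))
    (T : H →L[ℂ] H) :
    ∃ T' : HK →L[ℂ] HK, ∀ h k, T' (tmul h k) = tmul (T h) k := by
  set L : H ⊗[ℂ] K →ₗ[ℂ] HK := TensorProduct.lift tmul with hL
  set g : H ⊗[ℂ] K →ₗ[ℂ] HK := L ∘ₗ TensorProduct.map (T : H →ₗ[ℂ] H) LinearMap.id with hg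
  have hbd : ∀ x, ‖g x‖ ≤ ‖T‖ * ‖L x‖ := fun x => norm_L_map_le tmul hinner T x
  have hker : LinearMap.ker L ≤ LinearMap.ker g := by
    intro x hx
    rw [LinearMap.mem_ker] at hx ⊢
    have := hbd x
    rw [hx, norm_zero, mul_zero] at this
    exact norm_le_zero_iff.mp this
  set p := LinearMap.range L with hp
  set q : (H ⊗[ℂ] K ⧸ LinearMap.ker L) →ₗ[ℂ] HK := Submodule.liftQ _ g hker with hq
  set f₀ : p →ₗ[ℂ] HK := q ∘ₗ (LinearMap.quotKerEquivRange L).symm.toLinearMap with hf₀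
  have hf₀x : ∀ x : H ⊗[ℂ] K, f₀ ⟨L x, LinearMap.mem_range_self L x⟩ = g x := by
    intro x
    have h1 := LinearMap.quotKerEquivRange_symm_apply_image L x (LinearMap.mem_range_self L x)
    simp only [hf₀, LinearMap.coe_comp, Function.comp_apply, LinearEquiv.coe_coe, h1]
    rw [Submodule.mkQ_apply]
    exact Submodule.liftQ_apply _ _ _
  have hbd' : ∀ u : p, ‖f₀ u‖ ≤ ‖T‖ * ‖u‖ := by
    rintro ⟨u, hu⟩
    obtain ⟨x, rfl⟩ := hu
    rw [hf₀x x]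
    exact hbd x
  set f₁ : p →L[ℂ] HK := f₀.mkContinuous ‖T‖ hbd' with hf₁
  have hrange : (p : Set HK) = (Submodule.span ℂ {z : HK | ∃ h k, z = tmul h k} : Set HK) := by
    have : p = Submodule.span ℂ {z : HK | ∃ h k, z = tmul h k} := by
      apply le_antisymm
      · rintro _ ⟨x, rfl⟩
        induction x using TensorProduct.induction_on with
        | zero => simpa using Submodule.zero_mem _
        | tmul h k =>
            rw [hL, TensorProduct.lift.tmul]
            exact Submodule.subset_span ⟨h, k, rfl⟩
        | add y z hy hz => rw [map_add]; exact Submodule.add_mem _ hy hz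
      · rw [Submodule.span_le]
        rintro _ ⟨h, k, rfl⟩
        exact ⟨h ⊗ₜ[ℂ] k, TensorProduct.lift.tmul h k⟩
    rw [this]
  have hdense' : DenseRange (p.subtypeL) := by
    rw [DenseRange]
    have : Set.range p.subtypeL = (p : Set HK) := Subtype.range_coe
    rw [this, hrange]
    exact hdense
  have hind : IsUniformInducing (p.subtypeL) := isometry_subtype_coe.isUniformInducing
  refine ⟨f₁.extend p.subtypeL, fun h k => ?_⟩
  have hmem : tmul h k ∈ p := ⟨h ⊗ₜ[ℂ] k, TensorProduct.lift.tmul h k⟩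
  have : tmul h k = p.subtypeL ⟨tmul h k, hmem⟩ := rfl
  rw [this, ContinuousLinearMap.extend_eq (h_dense := hdense') (h_e := hind)]
  have h2 : (⟨tmul h k, hmem⟩ : p) = ⟨L (h ⊗ₜ[ℂ] k), LinearMap.mem_range_self L _⟩ := by
    apply Subtype.ext
    simp [hL, TensorProduct.lift.tmul]
  rw [hf₁, LinearMap.mkContinuous_apply, h2, hf₀x]
  simp only [hg, LinearMap.coe_comp, Function.comp_apply, TensorProduct.map_tmul]
  simp [hL, TensorProduct.lift.tmul]

end TensorExt
section CommSpec

variable {𝔄 : Type*} [CStarAlgebra 𝔄] [StarModule ℂ 𝔄]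

theorem spectrum_add_subset_of_commute (a b : 𝔄) (ha : IsSelfAdjoint a) (hb : IsSelfAdjoint b)
    (hab : a * b = b * a) :
    spectrum ℂ (a + b) ⊆ {z : ℂ | ∃ x ∈ spectrum ℂ a, ∃ y ∈ spectrum ℂ b, z = x + y} := by
  intro z hz
  have hcomm : ∀ x : 𝔄, x ∈ ({a, b} : Set 𝔄) → ∀ y : 𝔄, y ∈ ({a, b} : Set 𝔄) →
      x * y = y * x := by
    rintro x (rfl | rfl) y (rfl | rfl) <;> simp [hab]
  have hcomm_star : ∀ x : 𝔄, x ∈ ({a, b} : Set 𝔄) → ∀ y : 𝔄, y ∈ ({a, b} : Set 𝔄) →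
      x * star y = star y * x := by
    have hsa : ∀ y ∈ ({a, b} : Set 𝔄), star y = y := by
      rintro y hy
      rcases hy with h | h
      · rw [h]; exact ha.star_eq
      · rw [Set.mem_singleton_iff.mp h]; exact hb.star_eq
    intro x hx y hy
    rw [hsa y hy]; exact hcomm x hx y hy
  set S := (StarAlgebra.adjoin ℂ ({a, b} : Set 𝔄)).topologicalClosure with hSdef
  have hSclosed : IsClosed (S : Set 𝔄) := StarSubalgebra.isClosed_topologicalClosure _
  have hcS : ∀ x y : ↥S, x * y = y * x := by
    letI : CommRing (StarAlgebra.adjoin ℂ ({a, b} : Set 𝔄)) :=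
      StarAlgebra.adjoinCommRingOfComm ℂ hcomm hcomm_star
    exact fun x y =>
      (StarSubalgebra.commRingTopologicalClosure _ mul_comm).mul_comm x y
  letI : NormedCommRing ↥S := { SubringClass.toNormedRing S with mul_comm := hcS }
  haveI : CompleteSpace ↥S := hSclosed.completeSpace_coe
  have haS : a ∈ S := StarSubalgebra.le_topologicalClosure _
    (StarAlgebra.subset_adjoin ℂ _ (by simp))
  have hbS : b ∈ S := StarSubalgebra.le_topologicalClosure _
    (StarAlgebra.subset_adjoin ℂ _ (by simp))
  set a' : ↥S := ⟨a, haS⟩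
  set b' : ↥S := ⟨b, hbS⟩
  have hz' : z ∈ spectrum ℂ (a' + b') := by
    rw [StarSubalgebra.spectrum_eq (hS := hSclosed) (a := a' + b')]
    exact hz
  obtain ⟨φ, hφ⟩ := WeakDual.CharacterSpace.mem_spectrum_iff_exists.mp hz'
  refine ⟨φ a', ?_, φ b', ?_, ?_⟩
  · rw [← StarSubalgebra.spectrum_eq (hS := hSclosed) (a := a')]
    exact AlgHom.apply_mem_spectrum φ a'
  · rw [← StarSubalgebra.spectrum_eq (hS := hSclosed) (a := b')]
    exact AlgHom.apply_mem_spectrum φ b'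
  · rw [← hφ, map_add]

end CommSpec
section ApproxEigen

theorem approx_eigenvector {E : Type*} [NormedAddCommGroup E] [InnerProductSpace ℂ E]
    [CompleteSpace E] [Nontrivial E] (T : E →L[ℂ] E) (hT : IsSelfAdjoint T) {x : ℂ}
    (hx : x ∈ spectrum ℂ T) {ε : ℝ} (hε : 0 < ε) :
    ∃ u : E, ‖u‖ = 1 ∧ ‖T u - x • u‖ < ε := by
  by_contra hcon
  push_neg at hcon
  set T' : E →L[ℂ] E := T - x • (1 : E →L[ℂ] E) with hT'def
  have hT'app : ∀ u : E, T' u = T u - x • u := by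
    intro u
    simp [hT'def, ContinuousLinearMap.sub_apply, ContinuousLinearMap.smul_apply,
      ContinuousLinearMap.one_apply]
  have xre : x = (x.re : ℂ) := hT.mem_spectrum_eq_re hx
  have hxstar : star x = x := by
    rw [xre]; simp [Complex.star_def, Complex.conj_ofReal]
  have hT'sa : IsSelfAdjoint T' := by
    rw [hT'def]
    exact hT.sub (by rw [IsSelfAdjoint, star_smul, star_one, hxstar])
  have hlow : ∀ u : E, ε * ‖u‖ ≤ ‖T' u‖ := by
    intro u
    rcases eq_or_ne u 0 with rfl | hu
    · simp
    · have hnu : (0:ℝ) < ‖u‖ := norm_pos_iff.mpr hu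
      have h1 : ‖((‖u‖⁻¹ : ℝ) : ℂ) • u‖ = 1 := by
        rw [norm_smul]
        simp [ne_of_gt hnu]
      have h2 := hcon _ h1
      have h3 : T (((‖u‖⁻¹ : ℝ) : ℂ) • u) - x • (((‖u‖⁻¹ : ℝ) : ℂ) • u)
          = ((‖u‖⁻¹ : ℝ) : ℂ) • (T u - x • u) := by
        rw [map_smul, smul_sub, smul_comm]
      rw [h3, norm_smul] at h2
      simp only [Complex.norm_real, Real.norm_eq_abs,
        abs_of_nonneg (inv_nonneg.mpr hnu.le)] at h2
      rw [le_inv_mul_iff₀ hnu] at h2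
      rw [hT'app u]
      linarith
  have hanti : AntilipschitzWith (⟨ε, hε.le⟩ : NNReal)⁻¹ T' := by
    apply T'.antilipschitz_of_bound
    intro u
    have := hlow u
    change ‖u‖ ≤ ε⁻¹ * ‖T' u‖
    rw [le_inv_mul_iff₀ (by exact_mod_cast hε)]
    exact_mod_cast this
  have hinj : T'.ker = ⊥ := by
    rw [LinearMap.ker_eq_bot]; exact hanti.injective
  have hclosed : IsClosed (Set.range T') :=
    (hanti.isClosedEmbedding T'.uniformContinuous).isClosed_range
  have hrangeset : ((T'.range : Submodule ℂ E) : Set E) = Set.range ⇑T' := by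
    simp [LinearMap.coe_range]
  haveI hcompl : CompleteSpace (T'.range) := by
    have : IsClosed ((T'.range : Submodule ℂ E) : Set E) := by
      rw [hrangeset]; exact hclosed
    exact this.completeSpace_coe
  have hrange : T'.range = ⊤ := by
    rw [← Submodule.orthogonal_eq_bot_iff]
    rw [Submodule.eq_bot_iff]
    intro v hv
    have hv' : ∀ w : E, ⟪T' w, v⟫_ℂ = 0 := fun w =>
      (Submodule.mem_orthogonal _ v).mp hv _ (LinearMap.mem_range_self _ w)
    have hsymm := hT'sa.isSymmetric
    have hz : ∀ w : E, ⟪w, T' v⟫_ℂ = 0 := by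
      intro w
      have := hsymm w v
      simp only [ContinuousLinearMap.coe_coe] at this
      rw [← this]
      exact hv' w
    have hTv : T' v = 0 := by
      have := hz (T' v)
      rwa [inner_self_eq_zero] at this
    have : v ∈ T'.ker := hTv
    rwa [hinj, Submodule.mem_bot] at this
  set e := ContinuousLinearEquiv.ofBijective T' hinj hrange with he
  have happ : ∀ w : E, T' w = e w := by
    intro w
    conv_lhs => rw [← ContinuousLinearEquiv.coe_ofBijective T' hinj hrange]
    rfl
  have hunit : IsUnit T' := by
    refine ⟨⟨T', e.symm.toContinuousLinearMap, ?_, ?_⟩, rfl⟩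
    · ext v
      simp only [ContinuousLinearMap.mul_apply, ContinuousLinearMap.one_apply,
        ContinuousLinearMap.coe_coe, ContinuousLinearEquiv.coe_coe]
      rw [happ]
      exact e.apply_symm_apply v
    · ext v
      simp only [ContinuousLinearMap.mul_apply, ContinuousLinearMap.one_apply,
        ContinuousLinearMap.coe_coe, ContinuousLinearEquiv.coe_coe]
      rw [happ]
      exact e.symm_apply_apply v
  rw [spectrum.mem_iff] at hx
  apply hx
  have : algebraMap ℂ (E →L[ℂ] E) x - T = -T' := by
    rw [hT'def, neg_sub, Algebra.algebraMap_eq_smul_one]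
  rw [this]
  exact hunit.neg

end ApproxEigen
section NormTmul

variable {H K HK : Type*}
    [NormedAddCommGroup H] [InnerProductSpace ℂ H]
    [NormedAddCommGroup K] [InnerProductSpace ℂ K]
    [NormedAddCommGroup HK] [InnerProductSpace ℂ HK]
    (tmul : H →ₗ[ℂ] K →ₗ[ℂ] HK)
    (hinner : ∀ (h h' : H) (k k' : K),
      ⟪tmul h k, tmul h' k'⟫_ℂ = ⟪h, h'⟫_ℂ * ⟪k, k'⟫_ℂ)

include hinner in
theorem norm_tmul (h : H) (k : K) : ‖tmul h k‖ = ‖h‖ * ‖k‖ := by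
  have h1 : ⟪tmul h k, tmul h k⟫_ℂ = ⟪h, h⟫_ℂ * ⟪k, k⟫_ℂ := hinner h h k k
  rw [inner_self_eq_norm_sq_to_K, inner_self_eq_norm_sq_to_K, inner_self_eq_norm_sq_to_K] at h1
  have h2 : ‖tmul h k‖ ^ 2 = ‖h‖ ^ 2 * ‖k‖ ^ 2 := by exact_mod_cast h1
  nlinarith [norm_nonneg (tmul h k), norm_nonneg h, norm_nonneg k,
    mul_nonneg (norm_nonneg h) (norm_nonneg k)]

end NormTmul

/-- The spectrum of `A ⊗ id + id ⊗ B` on the Hilbert tensor product `H ⊗ K`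
(presented as a Hilbert space `HK` with an elementary-tensor map `tmul` having
dense span and the product inner product) is the sum set of the spectra. -/
theorem spectrum_tensor_sum
    {H K HK : Type*}
    [NormedAddCommGroup H] [InnerProductSpace ℂ H] [CompleteSpace H] [Nontrivial H]
    [NormedAddCommGroup K] [InnerProductSpace ℂ K] [CompleteSpace K] [Nontrivial K]
    [NormedAddCommGroup HK] [InnerProductSpace ℂ HK] [CompleteSpace HK]
    (tmul : H →ₗ[ℂ] K →ₗ[ℂ] HK)
    (hinner : ∀ (h h' : H) (k k' : K),
      ⟪tmul h k, tmul h' k'⟫_ℂ = ⟪h, h'⟫_ℂ * ⟪k, k'⟫_ℂ)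
    (hdense : Dense (Submodule.span ℂ {z : HK | ∃ h k, z = tmul h k} : Set HK))
    (A : H →L[ℂ] H) (hA : IsSelfAdjoint A)
    (B : K →L[ℂ] K) (hB : IsSelfAdjoint B)
    (C : HK →L[ℂ] HK)
    (hC : ∀ (h : H) (k : K), C (tmul h k) = tmul (A h) k + tmul h (B k)) :
    spectrum ℂ C =
      {z : ℂ | ∃ x ∈ spectrum ℂ A, ∃ y ∈ spectrum ℂ B, z = x + y} := by
  have ext2 : ∀ f g : HK →L[ℂ] HK, (∀ h k, f (tmul h k) = g (tmul h k)) → f = g := by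
    intro f g hfg
    refine ContinuousLinearMap.ext_on hdense ?_
    rintro z ⟨h, k, rfl⟩
    exact hfg h k
  have extC : ∀ f g : HK →L[ℂ] ℂ, (∀ h k, f (tmul h k) = g (tmul h k)) → f = g := by
    intro f g hfg
    refine ContinuousLinearMap.ext_on hdense ?_
    rintro z ⟨h, k, rfl⟩
    exact hfg h k
  have hinner' : ∀ (k k' : K) (h h' : H),
      ⟪tmul.flip k h, tmul.flip k' h'⟫_ℂ = ⟪k, k'⟫_ℂ * ⟪h, h'⟫_ℂ := by
    intro k k' h h'
    rw [LinearMap.flip_apply, LinearMap.flip_apply, hinner, mul_comm]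
  have hdense' : Dense (Submodule.span ℂ {z : HK | ∃ k h, z = tmul.flip k h} : Set HK) := by
    have : {z : HK | ∃ k h, z = tmul.flip k h} = {z : HK | ∃ h k, z = tmul h k} := by
      ext z
      constructor
      · rintro ⟨k, h, rfl⟩; exact ⟨h, k, by rw [LinearMap.flip_apply]⟩
      · rintro ⟨h, k, rfl⟩; exact ⟨k, h, by rw [LinearMap.flip_apply]⟩
    rw [this]
    exact hdense
  have hext : ∀ T : H →L[ℂ] H, ∃ T' : HK →L[ℂ] HK, ∀ h k, T' (tmul h k) = tmul (T h) k :=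
    fun T => exists_tensor_extension tmul hinner hdense T
  have hext' : ∀ T : K →L[ℂ] K, ∃ T' : HK →L[ℂ] HK, ∀ h k, T' (tmul h k) = tmul h (T k) := by
    intro T
    obtain ⟨T', hT'⟩ := exists_tensor_extension tmul.flip hinner' hdense' T
    exact ⟨T', fun h k => hT' k h⟩
  obtain ⟨a, haapp⟩ := hext A
  obtain ⟨b, hbapp⟩ := hext' B
  have hCab : C = a + b := by
    apply ext2
    intro h k
    rw [hC, ContinuousLinearMap.add_apply, haapp, hbapp]
  -- selfadjointness transfer
  have sa_of : ∀ (T' : HK →L[ℂ] HK),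
      (∀ h k h' k', ⟪tmul h k, T' (tmul h' k')⟫_ℂ = ⟪T' (tmul h k), tmul h' k'⟫_ℂ) →
      IsSelfAdjoint T' := by
    intro T' hsym
    rw [ContinuousLinearMap.isSelfAdjoint_iff_isSymmetric]
    have step1 : ∀ (h : H) (k : K) (w : HK),
        ⟪tmul h k, T' w⟫_ℂ = ⟪T' (tmul h k), w⟫_ℂ := by
      intro h k
      have heq := extC ((innerSL ℂ (tmul h k)).comp T') (innerSL ℂ (T' (tmul h k)))
        (fun h' k' => by
          simp only [ContinuousLinearMap.comp_apply, innerSL_apply_apply]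
          exact hsym h k h' k')
      intro w
      have := congrFun (congrArg (fun (f : HK →L[ℂ] ℂ) => (f : HK → ℂ)) heq) w
      simpa using this
    intro v w
    have step2 : ∀ (h' : H) (k' : K), ⟪T' v, tmul h' k'⟫_ℂ = ⟪v, T' (tmul h' k')⟫_ℂ := by
      intro h' k'
      have h1 := step1 h' k' v
      calc ⟪T' v, tmul h' k'⟫_ℂ
          = starRingEnd ℂ ⟪tmul h' k', T' v⟫_ℂ := (inner_conj_symm _ _).symm
        _ = starRingEnd ℂ ⟪T' (tmul h' k'), v⟫_ℂ := by rw [h1]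
        _ = ⟪v, T' (tmul h' k')⟫_ℂ := inner_conj_symm _ _
    have heq := extC (innerSL ℂ (T' v)) ((innerSL ℂ v).comp T')
      (fun h' k' => by
        simp only [ContinuousLinearMap.comp_apply, innerSL_apply_apply]
        exact step2 h' k')
    have := congrFun (congrArg (fun (f : HK →L[ℂ] ℂ) => (f : HK → ℂ)) heq) w
    simpa using this
  have asa : IsSelfAdjoint a := by
    apply sa_of
    intro h k h' k'
    rw [haapp, haapp, hinner, hinner]
    have hs := hA.isSymmetric h h'
    simp only [ContinuousLinearMap.coe_coe] at hs
    rw [← hs]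
  have bsa : IsSelfAdjoint b := by
    apply sa_of
    intro h k h' k'
    rw [hbapp, hbapp, hinner, hinner]
    have hs := hB.isSymmetric k k'
    simp only [ContinuousLinearMap.coe_coe] at hs
    rw [← hs]
  have hab : a * b = b * a := by
    apply ext2
    intro h k
    rw [ContinuousLinearMap.mul_apply, ContinuousLinearMap.mul_apply,
      hbapp, haapp, haapp, hbapp]
  -- spectral inclusion: σ(a) ⊆ σ(A)
  have spec_incl : spectrum ℂ a ⊆ spectrum ℂ A := by
    intro μ hμ
    by_contra hμT
    rw [spectrum.notMem_iff] at hμT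
    obtain ⟨V', hV'app⟩ := hext (↑hμT.unit⁻¹ : H →L[ℂ] H)
    have hTV : (algebraMap ℂ (H →L[ℂ] H) μ - A) * (↑hμT.unit⁻¹ : H →L[ℂ] H) = 1 :=
      hμT.mul_val_inv
    have hVT : (↑hμT.unit⁻¹ : H →L[ℂ] H) * (algebraMap ℂ (H →L[ℂ] H) μ - A) = 1 :=
      hμT.val_inv_mul
    have hconv : ∀ (h : H) (k : K), (algebraMap ℂ (HK →L[ℂ] HK) μ - a) (tmul h k)
        = tmul ((algebraMap ℂ (H →L[ℂ] H) μ - A) h) k := by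
      intro h k
      rw [ContinuousLinearMap.sub_apply, haapp, Algebra.algebraMap_eq_smul_one,
        Algebra.algebraMap_eq_smul_one, ContinuousLinearMap.smul_apply,
        ContinuousLinearMap.one_apply, ContinuousLinearMap.sub_apply,
        ContinuousLinearMap.smul_apply, ContinuousLinearMap.one_apply,
        map_sub, LinearMap.sub_apply, map_smul, LinearMap.smul_apply]
    have h1 : (algebraMap ℂ (HK →L[ℂ] HK) μ - a) * V' = 1 := by
      apply ext2
      intro h k
      rw [ContinuousLinearMap.mul_apply, hV'app, hconv, ← ContinuousLinearMap.mul_apply,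
        hTV, ContinuousLinearMap.one_apply, ContinuousLinearMap.one_apply]
    have h2 : V' * (algebraMap ℂ (HK →L[ℂ] HK) μ - a) = 1 := by
      apply ext2
      intro h k
      rw [ContinuousLinearMap.mul_apply, hconv, hV'app, ← ContinuousLinearMap.mul_apply,
        hVT, ContinuousLinearMap.one_apply, ContinuousLinearMap.one_apply]
    rw [spectrum.mem_iff] at hμ
    exact hμ ⟨⟨_, V', h1, h2⟩, rfl⟩
  -- spectral inclusion: σ(b) ⊆ σ(B)
  have spec_incl' : spectrum ℂ b ⊆ spectrum ℂ B := by
    intro μ hμ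
    by_contra hμT
    rw [spectrum.notMem_iff] at hμT
    obtain ⟨V', hV'app⟩ := hext' (↑hμT.unit⁻¹ : K →L[ℂ] K)
    have hTV : (algebraMap ℂ (K →L[ℂ] K) μ - B) * (↑hμT.unit⁻¹ : K →L[ℂ] K) = 1 :=
      hμT.mul_val_inv
    have hVT : (↑hμT.unit⁻¹ : K →L[ℂ] K) * (algebraMap ℂ (K →L[ℂ] K) μ - B) = 1 :=
      hμT.val_inv_mul
    have hconv : ∀ (h : H) (k : K), (algebraMap ℂ (HK →L[ℂ] HK) μ - b) (tmul h k)
        = tmul h ((algebraMap ℂ (K →L[ℂ] K) μ - B) k) := by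
      intro h k
      rw [ContinuousLinearMap.sub_apply, hbapp, Algebra.algebraMap_eq_smul_one,
        Algebra.algebraMap_eq_smul_one, ContinuousLinearMap.smul_apply,
        ContinuousLinearMap.one_apply, ContinuousLinearMap.sub_apply,
        ContinuousLinearMap.smul_apply, ContinuousLinearMap.one_apply,
        map_sub, map_smul]
    have h1 : (algebraMap ℂ (HK →L[ℂ] HK) μ - b) * V' = 1 := by
      apply ext2
      intro h k
      rw [ContinuousLinearMap.mul_apply, hV'app, hconv, ← ContinuousLinearMap.mul_apply,
        hTV, ContinuousLinearMap.one_apply, ContinuousLinearMap.one_apply]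
    have h2 : V' * (algebraMap ℂ (HK →L[ℂ] HK) μ - b) = 1 := by
      apply ext2
      intro h k
      rw [ContinuousLinearMap.mul_apply, hconv, hV'app, ← ContinuousLinearMap.mul_apply,
        hVT, ContinuousLinearMap.one_apply, ContinuousLinearMap.one_apply]
    rw [spectrum.mem_iff] at hμ
    exact hμ ⟨⟨_, V', h1, h2⟩, rfl⟩
  apply Set.Subset.antisymm
  · -- forward inclusion
    rw [hCab]
    intro z hz
    obtain ⟨x, hx, y, hy, rfl⟩ := spectrum_add_subset_of_commute a b asa bsa hab hz
    exact ⟨x, spec_incl hx, y, spec_incl' hy, rfl⟩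
  · -- reverse inclusion
    rintro z ⟨x, hx, y, hy, rfl⟩
    rw [spectrum.mem_iff]
    intro hu
    set V := (↑hu.unit⁻¹ : HK →L[ℂ] HK) with hVdef
    set M := ‖V‖ with hM
    have hεpos : (0:ℝ) < 1 / (2 * (M + 1)) := by
      have : (0:ℝ) ≤ M := norm_nonneg _
      positivity
    obtain ⟨u, hu1, hu2⟩ := approx_eigenvector A hA hx hεpos
    obtain ⟨v, hv1, hv2⟩ := approx_eigenvector B hB hy hεpos
    set w := tmul u v with hw
    have hwnorm : ‖w‖ = 1 := by
      rw [hw, norm_tmul tmul hinner, hu1, hv1, one_mul]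
    set D := C w - (x + y) • w with hD
    have hD2 : D = tmul (A u - x • u) v + tmul u (B v - y • v) := by
      have e1 : tmul (A u - x • u) v = tmul (A u) v - x • tmul u v := by
        rw [map_sub, LinearMap.sub_apply, map_smul, LinearMap.smul_apply]
      have e2 : tmul u (B v - y • v) = tmul u (B v) - y • tmul u v := by
        rw [map_sub, map_smul]
      rw [hD, hw, hC, e1, e2, add_smul]
      abel
    have hDnorm : ‖D‖ < 2 * (1 / (2 * (M + 1))) := by
      rw [hD2]
      calc ‖tmul (A u - x • u) v + tmul u (B v - y • v)‖
          ≤ ‖tmul (A u - x • u) v‖ + ‖tmul u (B v - y • v)‖ := norm_add_le _ _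
        _ = ‖A u - x • u‖ * ‖v‖ + ‖u‖ * ‖B v - y • v‖ := by
            rw [norm_tmul tmul hinner, norm_tmul tmul hinner]
        _ = ‖A u - x • u‖ + ‖B v - y • v‖ := by rw [hu1, hv1]; ring
        _ < 2 * (1 / (2 * (M + 1))) := by linarith
    have hVC : V * (algebraMap ℂ (HK →L[ℂ] HK) (x + y) - C) = 1 := hu.val_inv_mul
    have hwD : (algebraMap ℂ (HK →L[ℂ] HK) (x + y) - C) w = -D := by
      rw [ContinuousLinearMap.sub_apply, Algebra.algebraMap_eq_smul_one,
        ContinuousLinearMap.smul_apply, ContinuousLinearMap.one_apply, hD]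
      abel
    have hone : (1:ℝ) ≤ M * ‖D‖ := by
      have : w = V (-D) := by
        rw [← hwD, ← ContinuousLinearMap.mul_apply, hVC, ContinuousLinearMap.one_apply]
      calc (1:ℝ) = ‖w‖ := hwnorm.symm
        _ = ‖V (-D)‖ := by rw [this]
        _ ≤ M * ‖-D‖ := V.le_opNorm _
        _ = M * ‖D‖ := by rw [norm_neg]
    have hMnn : (0:ℝ) ≤ M := norm_nonneg _
    have hDnn : (0:ℝ) ≤ ‖D‖ := norm_nonneg _
    have hMpos : (0:ℝ) < M + 1 := by linarith
    have heq : 2 * (1 / (2 * (M + 1))) = 1 / (M + 1) := by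
      field_simp
    rw [heq, lt_div_iff₀ hMpos] at hDnorm
    nlinarith
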